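/- arXiv:2004.01955 — 3 statements merged into one kernel-verified Lean document; each statement's English description precedes it below -/
import Mathlib

section
/- A 2-edge-coloured complete multipartite graph is colour-connected if and only if it is trail-colour-connected. -/
/-- A 2-edge-coloured (multi)graph: for each colour (`false` = colour 1 / red,
`true` = colour 2 / blue) a symmetric loopless adjacency relation. -/
structure TwoEC (V : Type) where
  adj : Bool → V → V → Prop
  symm : ∀ c u v, adj c u v → adj c v u
  loopless : ∀ c v, ¬ adj c v v

namespace TwoEC

variable {V : Type}

/-- A step of a walk: (source, colour, target). -/
abbrev Step (V : Type) := V × Bool × V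

def stepSrc (s : Step V) : V := s.1
def stepCol (s : Step V) : Bool := s.2.1
def stepTgt (s : Step V) : V := s.2.2
/-- The (coloured, undirected) edge used by a step. -/
def stepEdge (s : Step V) : Bool × Sym2 V := (s.2.1, s(s.1, s.2.2))

/-- `L` is an alternating walk from `u` to `v` (nonempty list of steps,
consecutive steps share a vertex and differ in colour). -/
def IsAltWalk (G : TwoEC V) (u v : V) (L : List (Step V)) : Prop :=
  L ≠ [] ∧ L.head?.map stepSrc = some u ∧ L.getLast?.map stepTgt = some v ∧
  (∀ s ∈ L, G.adj (stepCol s) (stepSrc s) (stepTgt s)) ∧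
  L.Chain' (fun s t => stepTgt s = stepSrc t ∧ stepCol s ≠ stepCol t)

def firstColour (L : List (Step V)) : Option Bool := L.head?.map stepCol
def lastColour (L : List (Step V)) : Option Bool := L.getLast?.map stepCol

/-- An alternating trail: an alternating walk using no (coloured) edge twice. -/
def IsAltTrail (G : TwoEC V) (u v : V) (L : List (Step V)) : Prop :=
  G.IsAltWalk u v L ∧ (L.map stepEdge).Nodup

/-- An alternating path: an alternating walk with no repeated vertex. -/
def IsAltPath (G : TwoEC V) (u v : V) (L : List (Step V)) : Prop :=
  G.IsAltWalk u v L ∧ (L.map stepSrc ++ [v]).Nodup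

/-- A (nonempty) closed alternating trail: also the last and first colours differ. -/
def IsClosedAltTrail (G : TwoEC V) (L : List (Step V)) : Prop :=
  ∃ u, G.IsAltTrail u u L ∧ lastColour L ≠ firstColour L

/-- An alternating cycle: a closed alternating walk with pairwise distinct vertices. -/
def IsAltCycle (G : TwoEC V) (L : List (Step V)) : Prop :=
  (∃ u, G.IsAltWalk u u L) ∧ (L.map stepSrc).Nodup ∧ lastColour L ≠ firstColour L

/-- The walk `L` visits the vertex `v`. -/
def visits (L : List (Step V)) (v : V) : Prop := v ∈ L.map stepSrc ∨ v ∈ L.map stepTgt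

/-- A spanning closed alternating trail exists. -/
def Supereulerian (G : TwoEC V) : Prop :=
  ∃ L, G.IsClosedAltTrail L ∧ ∀ v : V, visits L v

/-- Colour-connectivity: between any two distinct vertices there are two alternating
paths whose union is an alternating closed walk (equivalently, they start with
different colours and end with different colours). -/
def ColourConnected (G : TwoEC V) : Prop :=
  ∀ u v : V, u ≠ v → ∃ P₁ P₂, G.IsAltPath u v P₁ ∧ G.IsAltPath u v P₂ ∧
    firstColour P₁ ≠ firstColour P₂ ∧ lastColour P₁ ≠ lastColour P₂

/-- Trail-colour-connectivity: same as colour-connectivity but with trails. -/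
def TrailColourConnected (G : TwoEC V) : Prop :=
  ∀ u v : V, u ≠ v → ∃ T₁ T₂, G.IsAltTrail u v T₁ ∧ G.IsAltTrail u v T₂ ∧
    firstColour T₁ ≠ firstColour T₂ ∧ lastColour T₁ ≠ lastColour T₂

/-- The induced 2-edge-coloured subgraph on a set of vertices. -/
def induce (G : TwoEC V) (S : Set V) : TwoEC S where
  adj c u v := G.adj c u v
  symm := fun c u v h => G.symm c u v h
  loopless := fun c v => G.loopless c v

/-- An eulerian factor: a partition of the vertex set into classes each of which
induces a supereulerian subgraph. -/
def EulerianFactor (G : TwoEC V) : Prop :=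
  ∃ r : Setoid V, ∀ v : V, Supereulerian (G.induce {u | r.r u v})

/-- `H` is an extension of `G`: obtained by blowing up each vertex of `G` into a
nonempty independent set, preserving colours. -/
def IsExtension (G : TwoEC V) {W : Type} (H : TwoEC W) : Prop :=
  ∃ f : W → V, Function.Surjective f ∧ ∀ c x y, H.adj c x y ↔ G.adj c (f x) (f y)

/-- M-closed: endpoints of every monochromatic path of length two are adjacent. -/
def MClosed (G : TwoEC V) : Prop :=
  ∀ c x y z, G.adj c x y → G.adj c y z → x ≠ z → ∃ c', G.adj c' x z

/-- Complete multipartite 2-edge-coloured graph: two vertices are adjacent (in some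
colour) iff they lie in different parts. -/
def IsCompleteMultipartite (G : TwoEC V) : Prop :=
  ∃ p : V → V, ∀ u v, (∃ c, G.adj c u v) ↔ p u ≠ p v

/-- Complete bipartite 2-edge-coloured graph (with both parts nonempty). -/
def IsCompleteBipartite (G : TwoEC V) : Prop :=
  ∃ p : V → Bool, (∀ b, ∃ x, p x = b) ∧ ∀ u v, (∃ c, G.adj c u v) ↔ p u ≠ p v

/-- A 2-edge-coloured complete graph: each pair of distinct vertices is joined by
exactly one edge, which has exactly one colour. -/
def IsComplete (G : TwoEC V) : Prop :=
  ∀ u v : V, u ≠ v →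
    ((G.adj false u v ∨ G.adj true u v) ∧ ¬ (G.adj false u v ∧ G.adj true u v))

/-- An alternating cycle factor: vertex-disjoint alternating cycles covering `V`. -/
def AltCycleFactor (G : TwoEC V) : Prop :=
  ∃ Ls : Set (List (Step V)), (∀ L ∈ Ls, G.IsAltCycle L) ∧
    (∀ v : V, ∃ L ∈ Ls, visits L v) ∧
    (∀ L₁ ∈ Ls, ∀ L₂ ∈ Ls, L₁ ≠ L₂ → ∀ v : V, ¬ (visits L₁ v ∧ visits L₂ v))

/-- An alternating hamiltonian cycle. -/
def IsAltHamCycle (G : TwoEC V) (L : List (Step V)) : Prop :=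
  G.IsAltCycle L ∧ ∀ v : V, visits L v

/-- Connectivity of the underlying (uncoloured) graph. -/
def Connected (G : TwoEC V) : Prop :=
  ∀ u v : V, Relation.ReflTransGen (fun a b => ∃ c, G.adj c a b) u v

end TwoEC

namespace TwoEC

variable {V : Type}

def colA (s : Bool) (k : ℕ) : Bool := if k % 2 = 1 then !s else s
lemma colA_zero (s : Bool) : colA s 0 = s := rfl
lemma colA_congr (s : Bool) {k l : ℕ} (h : k % 2 = l % 2) : colA s k = colA s l := by
  unfold colA; rw [h]
lemma colA_succ (s : Bool) (k : ℕ) : colA s (k+1) = !(colA s k) := by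
  unfold colA
  rcases Nat.mod_two_eq_zero_or_one k with h1 | h1
  · simp [h1, (by omega : (k+1) % 2 = 1)]
  · simp [h1, (by omega : (k+1) % 2 = 0)]
lemma colA_add (s : Bool) (a b : ℕ) : colA s (a + b) = colA (colA s a) b := by
  unfold colA
  rcases Nat.mod_two_eq_zero_or_one a with ha | ha <;>
    rcases Nat.mod_two_eq_zero_or_one b with hb | hb <;>
      simp [ha, hb, (by omega : (a+b) % 2 = (a % 2 + b % 2) % 2)]
def AWx (G : TwoEC V) (n : ℕ) (u v : V) (s : Bool) (x : ℕ → V) : Prop :=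
  x 0 = u ∧ x n = v ∧ ∀ k, k < n → G.adj (colA s k) (x k) (x (k+1))

variable {G : TwoEC V} {n : ℕ} {u v : V} {s : Bool} {x : ℕ → V}

lemma AWx_congr {y : ℕ → V} (h : AWx G n u v s x) (hxy : ∀ k, x k = y k) :
    AWx G n u v s y := by
  refine ⟨(hxy 0).symm.trans h.1, (hxy n).symm.trans h.2.1, fun k hk => ?_⟩
  rw [← hxy k, ← hxy (k+1)]; exact h.2.2 k hk

lemma AWx.pos (h : AWx G n u v s x) (huv : u ≠ v) : 1 ≤ n := by
  rcases Nat.eq_zero_or_pos n with h0 | h1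
  · exact absurd (h.1.symm.trans (h0 ▸ h.2.1)) huv
  · exact h1

lemma AWx.segment (h : AWx G n u v s x) (a b : ℕ) (hab : a ≤ b) (hbn : b ≤ n) :
    AWx G (b - a) (x a) (x b) (colA s a) (fun k => x (a + k)) := by
  refine ⟨by simp, by simp [Nat.add_sub_cancel' hab], fun k hk => ?_⟩
  have := h.2.2 (a + k) (by omega)
  rw [colA_add] at this
  exact this

lemma AWx.append {m m' : ℕ} {w : V} {y : ℕ → V}
    (h1 : AWx G m u w s x) (h2 : AWx G m' w v (colA s m) y) :
    AWx G (m + m') u v s (fun k => if k < m then x k else y (k - m)) := by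
  refine ⟨?_, ?_, fun k hk => ?_⟩
  · by_cases hm : 0 < m
    · simp [hm, h1.1]
    · have hm0 : m = 0 := by omega
      have hw : y 0 = w := h2.1
      have hwu : w = u := by rw [← h1.2.1, hm0, h1.1]
      simp [hm, hw, hwu]
  · have : ¬ (m + m' < m) := by omega
    simp only [this, if_false]
    rw [(by omega : m + m' - m = m'), h2.2.1]
  · by_cases hk1 : k < m
    · by_cases hk2 : k + 1 < m
      · simpa [hk1, hk2] using h1.2.2 k hk1
      · have hk3 : k + 1 = m := by omega
        have := h1.2.2 k hk1
        rw [hk3] at this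
        rw [h1.2.1, ← h2.1] at this
        simpa [hk1, hk2, hk3] using this
    · have hk2 : ¬ (k + 1 < m) := by omega
      have := h2.2.2 (k - m) (by omega)
      rw [← colA_add] at this
      rw [(by omega : m + (k - m) = k)] at this
      simp only [hk1, hk2, if_false]
      rw [(by omega : k + 1 - m = k - m + 1)]
      exact this

lemma AWx.reverse (h : AWx G n u v s x) (hn : 1 ≤ n) :
    AWx G n v u (colA s (n - 1)) (fun k => x (n - k)) := by
  refine ⟨by simp [h.2.1], by simp [h.1], fun k hk => ?_⟩
  have hadj := h.2.2 (n - k - 1) (by omega)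
  have hcol : colA s (n - k - 1) = colA (colA s (n - 1)) k := by
    rw [← colA_add]; exact colA_congr s (by omega)
  rw [hcol, (by omega : n - k - 1 + 1 = n - k)] at hadj
  have := G.symm _ _ _ hadj
  simpa [(by omega : n - (k+1) = n - k - 1)] using this

lemma AWx.single {a b : V} {γ : Bool} (h : G.adj γ a b) :
    AWx G 1 a b γ (fun k => if k = 0 then a else b) := by
  refine ⟨by simp, by simp, fun k hk => ?_⟩
  have hk0 : k = 0 := by omega
  subst hk0
  simpa [colA_zero] using h



/-- existence of an alternating path (injective walk) with colours (s,t). -/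
def PWx (G : TwoEC V) (u v : V) (s t : Bool) : Prop :=
  ∃ n x, AWx G n u v s x ∧ 1 ≤ n ∧ colA s (n-1) = t ∧
    ∀ k l, k ≤ n → l ≤ n → x k = x l → k = l

def GoalP (G : TwoEC V) (u v : V) (s t : Bool) : Prop :=
  PWx G u v s t ∨ (PWx G u v (!s) t ∧ PWx G u v s (!t))

lemma bool_eq_or {a b : Bool} : a = b ∨ a = !b := by
  cases a <;> cases b <;> simp

lemma goalH1 {t γ : Bool} (h : GoalP G u v s γ) :
    GoalP G u v s t ∨ PWx G u v s (!t) := by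
  rcases bool_eq_or (a := γ) (b := t) with h1 | h1
  · left; rwa [h1] at h
  · rw [h1] at h
    rcases h with h | h
    · right; exact h
    · left; left
      have := h.2
      rwa [Bool.not_not] at this

lemma goalH2 {γ : Bool} {t : Bool} (h : GoalP G u v γ t) :
    GoalP G u v s t ∨ PWx G u v (!s) t := by
  rcases bool_eq_or (a := γ) (b := s) with h1 | h1
  · left; rwa [h1] at h
  · rw [h1] at h
    rcases h with h | h
    · right; exact h
    · left; left
      have := h.1
      rwa [Bool.not_not] at this

section Constructions

variable (hw : AWx G n u v s x) {i j : ℕ}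

/-- even-gap shortcut -/
lemma constructE (hw : AWx G n u v s x) (huv : u ≠ v) (hij : i < j) (hjn : j ≤ n)
    (hx : x i = x j) (hpar : (j - i) % 2 = 0) :
    ∃ m y, 1 ≤ m ∧ m < n ∧ AWx G m u v s y ∧ colA s (m-1) = colA s (n-1) := by
  have h1 : AWx G i u (x i) s (fun k => x (0 + k)) := by
    have := hw.segment 0 i (by omega) (by omega)
    simpa [hw.1, colA_zero] using this
  have h2 : AWx G (n - j) (x j) v (colA s i) (fun k => x (j + k)) := by
    have := hw.segment j n (by omega) (le_refl n)
    rw [colA_congr s (by omega : j % 2 = i % 2)] at this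
    simpa [hw.2.1] using this
  rw [← hx] at h2
  have h3 := h1.append h2
  have hm1 : 1 ≤ i + (n - j) := by
    rcases Nat.eq_zero_or_pos (i + (n-j)) with h0 | h0
    · exact absurd (h3.1.symm.trans (h0 ▸ h3.2.1)) huv
    · exact h0
  exact ⟨i + (n - j), _, hm1, by omega, h3, colA_congr s (by omega)⟩

lemma gap_ge_three (hw : AWx G n u v s x) (hij : i < j) (hjn : j ≤ n)
    (hx : x i = x j) (hpar : (j - i) % 2 = 1) : i + 3 ≤ j := by
  by_contra hc
  have hj1 : j = i + 1 := by omega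
  have := hw.2.2 i (by omega)
  rw [← hj1, ← hx] at this
  exact G.loopless _ _ this

/-- find an in-loop vertex in a different part from a given vertex `z`. -/
lemma loop_vertex (p : V → V) (hp : ∀ a b, (∃ c, G.adj c a b) ↔ p a ≠ p b)
    (hw : AWx G n u v s x) (hij : i < j) (hjn : j ≤ n)
    (hx : x i = x j) (hpar : (j - i) % 2 = 1) (z : V) :
    ∃ r, i + 1 ≤ r ∧ r ≤ j - 1 ∧ p (x r) ≠ p z := by
  have h3 := gap_ge_three hw hij hjn hx hpar
  by_cases h1 : p (x (i+1)) ≠ p z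
  · exact ⟨i+1, le_refl _, by omega, h1⟩
  · push_neg at h1
    have hadj := hw.2.2 (i+1) (by omega)
    have hne : p (x (i+1)) ≠ p (x (i+2)) := (hp _ _).mp ⟨_, hadj⟩
    exact ⟨i+2, by omega, by omega, by rw [← h1]; exact fun h => hne h.symm⟩

/-- a strictly shorter walk u→v with the same start colour (odd-gap repetition). -/
lemma constructS (p : V → V) (hp : ∀ a b, (∃ c, G.adj c a b) ↔ p a ≠ p b)
    (hw : AWx G n u v s x) (huv : u ≠ v) (hij : i < j) (hjn : j ≤ n)
    (hx : x i = x j) (hpar : (j - i) % 2 = 1) :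
    ∃ m y, 1 ≤ m ∧ m < n ∧ AWx G m u v s y := by
  by_cases hj' : j + 1 ≤ n
  · -- C2: jump from the loop to v
    obtain ⟨r, hr1, hr2, hrp⟩ := loop_vertex p hp hw hij hjn hx hpar v
    obtain ⟨γ, hγ⟩ := (hp (x r) v).mpr hrp
    rcases bool_eq_or (a := γ) (b := colA s r) with hc | hc
    · -- forward: prefix 0..r then jump
      have h1 : AWx G r u (x r) s (fun k => x (0 + k)) := by
        have := hw.segment 0 r (by omega) (by omega)
        simpa [hw.1, colA_zero] using this
      have h2 : AWx G 1 (x r) v (colA s r) _ := hc ▸ AWx.single hγ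
      exact ⟨r + 1, _, by omega, by omega, h1.append h2⟩
    · -- backward: prefix 0..i, reversed segment r..j, jump
      have h1 : AWx G i u (x i) s (fun k => x (0 + k)) := by
        have := hw.segment 0 i (by omega) (by omega)
        simpa [hw.1, colA_zero] using this
      have h2 : AWx G (j - r) (x j) (x r) (colA s i) _ :=
        (colA_congr s (by omega : (r + (j - r - 1)) % 2 = i % 2)) ▸
          ((colA_add s r (j - r - 1)) ▸
            ((hw.segment r j (by omega) (by omega)).reverse (by omega)))
      rw [← hx] at h2
      have h3 := h1.append h2
      have hγ2 : γ = colA s (i + (j - r)) := by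
        rw [hc, show (!(colA s r)) = colA s (r + 1) from (colA_succ s r).symm]
        exact colA_congr s (by omega)
      have h4 : AWx G 1 (x r) v (colA s (i + (j - r))) _ := hγ2 ▸ AWx.single hγ
      exact ⟨i + (j - r) + 1, _, by omega, by omega, h3.append h4⟩
  · -- C5: j = n, take prefix 0..i
    have hj : j = n := by omega
    have hi : 1 ≤ i := by
      rcases Nat.eq_zero_or_pos i with h0 | h0
      · exfalso; apply huv
        rw [← hw.1, ← hw.2.1, ← hj, ← hx, h0]
      · exact h0
    have h1 : AWx G i u (x i) s (fun k => x (0 + k)) := by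
      have := hw.segment 0 i (by omega) (by omega)
      simpa [hw.1, colA_zero] using this
    rw [hx, hj, hw.2.1] at h1
    exact ⟨i, _, hi, by omega, h1⟩

/-- a strictly shorter walk u→v with the same end colour (odd-gap repetition). -/
lemma constructT (p : V → V) (hp : ∀ a b, (∃ c, G.adj c a b) ↔ p a ≠ p b)
    (hw : AWx G n u v s x) (huv : u ≠ v) (hij : i < j) (hjn : j ≤ n)
    (hx : x i = x j) (hpar : (j - i) % 2 = 1) :
    ∃ m γ y, 1 ≤ m ∧ m < n ∧ AWx G m u v γ y ∧ colA γ (m-1) = colA s (n-1) := by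
  by_cases hi' : 1 ≤ i
  · -- C3: jump from u into the loop, then to x j, then the tail
    obtain ⟨r, hr1, hr2, hrp⟩ := loop_vertex p hp hw hij hjn hx hpar u
    obtain ⟨γ, hγ0⟩ := (hp u (x r)).mpr (fun h => hrp h.symm)
    have h3 := gap_ge_three hw hij hjn hx hpar
    have htail : AWx G (n - j) (x j) v (colA s j) (fun k => x (j + k)) := by
      have := hw.segment j n (by omega) (le_refl n)
      simpa [hw.2.1] using this
    rcases bool_eq_or (a := γ) (b := colA s (r-1)) with hc | hc
    · -- forward: jump, then segment r..j, then tail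
      have h1 : AWx G 1 u (x r) γ _ := AWx.single hγ0
      have h2 : AWx G (j - r) (x r) (x j) (colA γ 1) (fun k => x (r + k)) := by
        have := hw.segment r j (by omega) (by omega)
        have hcc : colA s r = colA γ 1 := by
          rw [hc, show colA s (r-1) = colA s (r-1) from rfl]
          rw [show colA (colA s (r-1)) 1 = colA s (r-1+1) from (colA_add s (r-1) 1).symm]
          exact colA_congr s (by omega)
        rwa [hcc] at this
      have h12 := h1.append h2
      have h123 := h12.append (by
        rw [show colA s j = colA γ (1 + (j - r)) from ?_] at htail
        · exact htail
        · rw [hc, ← colA_add]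
          exact colA_congr s (by omega))
      refine ⟨1 + (j - r) + (n - j), γ, _, by omega, by omega, h123, ?_⟩
      rw [hc, ← colA_add]
      exact colA_congr s (by omega)
    · -- backward: jump, then reversed segment i..r, then tail
      have hγr : γ = colA s r := by
        rw [hc, show (!(colA s (r-1))) = colA s (r-1+1) from (colA_succ s (r-1)).symm]
        exact colA_congr s (by omega)
      have h1 : AWx G 1 u (x r) γ _ := AWx.single hγ0
      have h2 : AWx G (r - i) (x r) (x i) (colA γ 1)
          (fun k => x (i + (r - i - k))) := by
        have := (hw.segment i r (by omega) (by omega)).reverse (by omega)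
        rw [← colA_add, show colA s (i + (r - i - 1)) = colA γ 1 from ?_] at this
        · exact this
        · rw [hγr, ← colA_add]
          exact colA_congr s (by omega)
      rw [hx] at h2
      have h12 := h1.append h2
      have h123 := h12.append (by
        rw [show colA s j = colA γ (1 + (r - i)) from ?_] at htail
        · exact htail
        · rw [hγr, ← colA_add]
          exact colA_congr s (by omega))
      refine ⟨1 + (r - i) + (n - j), γ, _, by omega, by omega, h123, ?_⟩
      rw [hγr, ← colA_add]
      exact colA_congr s (by omega)
  · -- C4: i = 0, drop the prefix
    have hi : i = 0 := by omega
    have hjn' : j < n := by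
      rcases Nat.lt_or_ge j n with h0 | h0
      · exact h0
      · exfalso; apply huv
        rw [← hw.1, ← hw.2.1, show n = j by omega, ← hx, hi]
    have h1 : AWx G (n - j) u v (colA s j) (fun k => x (j + k)) := by
      have := hw.segment j n (by omega) (le_refl n)
      rw [← hx, hi, hw.1] at this
      simpa [hw.2.1] using this
    refine ⟨n - j, colA s j, _, by omega, by omega, h1, ?_⟩
    rw [← colA_add]
    exact colA_congr s (by omega)

end Constructions

theorem mainLemma (G : TwoEC V) (p : V → V) (hp : ∀ a b, (∃ c, G.adj c a b) ↔ p a ≠ p b) :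
    ∀ n u v s (x : ℕ → V), u ≠ v → AWx G n u v s x → GoalP G u v s (colA s (n-1)) := by
  intro n
  induction n using Nat.strong_induction_on with
  | _ n IH =>
    intro u v s x huv hw
    by_cases hrep : ∃ i j, i < j ∧ j ≤ n ∧ x i = x j
    · obtain ⟨i, j, hij, hjn, hx⟩ := hrep
      rcases Nat.mod_two_eq_zero_or_one (j - i) with hpar | hpar
      · obtain ⟨m, y, hm1, hmn, hwy, hcol⟩ := constructE hw huv hij hjn hx hpar
        have := IH m hmn u v s y huv hwy
        rwa [hcol] at this
      · obtain ⟨m1, y1, hm11, hm1n, hwy1⟩ := constructS p hp hw huv hij hjn hx hpar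
        obtain ⟨m2, γ2, y2, hm21, hm2n, hwy2, hcol2⟩ :=
          constructT p hp hw huv hij hjn hx hpar
        have G1 := IH m1 hm1n u v s y1 huv hwy1
        have G2 := IH m2 hm2n u v γ2 y2 huv hwy2
        rw [hcol2] at G2
        rcases goalH1 (t := colA s (n-1)) G1 with h | h
        · exact h
        · rcases goalH2 (s := s) G2 with h' | h'
          · exact h'
          · right; exact ⟨h', h⟩
    · push_neg at hrep
      left
      refine ⟨n, x, hw, hw.pos huv, rfl, fun k l hk hl he => ?_⟩
      by_contra hne
      rcases Nat.lt_or_ge k l with h | h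
      · exact hrep k l h hl he
      · exact hrep l k (by omega) hk he.symm



/-- the canonical step list of a function-walk. -/
def mkL (x : ℕ → V) (s : Bool) (n : ℕ) : List (Step V) :=
  (List.range n).map (fun k => ((x k, colA s k, x (k+1)) : Step V))

lemma mkL_length (x : ℕ → V) (s : Bool) (n : ℕ) : (mkL x s n).length = n := by
  simp [mkL]

lemma mkL_getElem (x : ℕ → V) (s : Bool) (n : ℕ) (k : ℕ) (hk : k < (mkL x s n).length) :
    (mkL x s n)[k] = ((x k, colA s k, x (k+1)) : Step V) := by
  simp [mkL]

lemma bool_ne_not (b : Bool) : b ≠ !b := by cases b <;> simp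

lemma AWx.toList {G : TwoEC V} {n : ℕ} {u v : V} {s : Bool} {x : ℕ → V}
    (h : AWx G n u v s x) (hn : 1 ≤ n) :
    G.IsAltWalk u v (mkL x s n) ∧ firstColour (mkL x s n) = some s ∧
      lastColour (mkL x s n) = some (colA s (n-1)) ∧
      (mkL x s n).map stepSrc = (List.range n).map x := by
  have hlen : (mkL x s n).length = n := mkL_length x s n
  have hne : mkL x s n ≠ [] := by
    intro hc; rw [← hlen, hc] at hn; simp at hn
  have hhead : (mkL x s n).head? = some ((x 0, colA s 0, x 1) : Step V) := by
    rw [List.head?_eq_getElem?, List.getElem?_eq_getElem (by omega)]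
    rw [mkL_getElem x s n 0 (by omega)]
  have hlast : (mkL x s n).getLast? = some ((x (n-1), colA s (n-1), x n) : Step V) := by
    rw [List.getLast?_eq_getElem?, mkL_length]
    rw [List.getElem?_eq_getElem (by rw [mkL_length]; omega : n - 1 < (mkL x s n).length)]
    rw [mkL_getElem x s n (n-1) (by rw [mkL_length]; omega), (by omega : n - 1 + 1 = n)]
  refine ⟨⟨hne, ?_, ?_, ?_, ?_⟩, ?_, ?_, ?_⟩
  · rw [hhead]; simp [stepSrc, h.1]
  · rw [hlast]; simp [stepTgt, h.2.1]
  · intro st hst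
    obtain ⟨k, hk, rfl⟩ := List.mem_map.mp hst
    exact h.2.2 k (List.mem_range.mp hk)
  · refine List.isChain_iff_getElem.mpr ?_
    intro i hi
    rw [hlen] at hi
    have e1 : (mkL x s n).get ⟨i, by omega⟩ = ((x i, colA s i, x (i+1)) : Step V) :=
      mkL_getElem x s n i (by omega)
    have e2 : (mkL x s n).get ⟨i+1, by omega⟩ = ((x (i+1), colA s (i+1), x (i+2)) : Step V) :=
      mkL_getElem x s n (i+1) (by omega)
    simp only [List.get_eq_getElem] at e1 e2
    rw [e1, e2]
    refine ⟨rfl, ?_⟩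
    show colA s i ≠ colA s (i+1)
    rw [colA_succ]
    exact bool_ne_not _
  · unfold firstColour; rw [hhead]; rfl
  · unfold lastColour; rw [hlast]; rfl
  · unfold mkL
    rw [List.map_map]
    rfl

lemma PWx.toPath {G : TwoEC V} {u v : V} {s t : Bool} (h : PWx G u v s t) :
    ∃ P, G.IsAltPath u v P ∧ firstColour P = some s ∧ lastColour P = some t := by
  obtain ⟨n, x, haw, hn, hcol, hinj⟩ := h
  obtain ⟨hwalk, hfc, hlc, hmap⟩ := haw.toList hn
  refine ⟨mkL x s n, ⟨hwalk, ?_⟩, hfc, by rw [hlc, hcol]⟩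
  rw [hmap, ← haw.2.1]
  have : (List.range n).map x ++ [x n] = (List.range (n+1)).map x := by
    rw [List.range_succ, List.map_append]; rfl
  rw [this]
  refine List.Nodup.map_on ?_ List.nodup_range
  intro a ha b hb hab
  exact hinj a b (by simpa [Nat.lt_succ_iff] using List.mem_range.mp ha)
    (by simpa [Nat.lt_succ_iff] using List.mem_range.mp hb) hab

lemma AWx.toTrail {G : TwoEC V} {n : ℕ} {u v : V} {s : Bool} {x : ℕ → V}
    (h : AWx G n u v s x) (hn : 1 ≤ n)
    (hinj : ∀ k l, k ≤ n → l ≤ n → x k = x l → k = l) :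
    ∃ T, G.IsAltTrail u v T ∧ firstColour T = some s ∧
      lastColour T = some (colA s (n-1)) := by
  obtain ⟨hwalk, hfc, hlc, -⟩ := h.toList hn
  refine ⟨mkL x s n, ⟨hwalk, ?_⟩, hfc, hlc⟩
  unfold mkL
  rw [List.map_map]
  refine List.Nodup.map_on ?_ List.nodup_range
  intro a ha b hb hab
  have ha' := List.mem_range.mp ha
  have hb' := List.mem_range.mp hb
  have h2 : s(x a, x (a+1)) = s(x b, x (b+1)) :=
    congrArg Prod.snd hab
  replace h2 := (Sym2.mk_eq_mk_iff (p := (x a, x (a+1))) (q := (x b, x (b+1)))).mp h2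
  rcases h2 with h2 | h2
  · exact hinj a b (by omega) (by omega) (congrArg Prod.fst h2)
  · have e1 : x a = x (b+1) := congrArg Prod.fst h2
    have e2 : x (a+1) = x b := congrArg Prod.snd h2
    have := hinj a (b+1) (by omega) (by omega) e1
    have := hinj (a+1) b (by omega) (by omega) e2
    omega

lemma IsAltWalk.toAWx {G : TwoEC V} {u v : V} {L : List (Step V)}
    (h : G.IsAltWalk u v L) :
    ∃ s, firstColour L = some s ∧ lastColour L = some (colA s (L.length - 1)) ∧
      AWx G L.length u v s
        (fun k => if hk : k < L.length then stepSrc (L.get ⟨k, hk⟩) else v) := by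
  obtain ⟨hne, hhead, hlast, hadj, hchain⟩ := h
  set n := L.length with hn
  have hn1 : 1 ≤ n := List.length_pos_iff.mpr hne
  have hh : stepSrc (L.get ⟨0, by omega⟩) = u := by
    rw [List.head?_eq_getElem?, List.getElem?_eq_getElem (by omega : 0 < L.length)] at hhead
    simpa using hhead
  have hl : stepTgt (L.get ⟨n-1, by omega⟩) = v := by
    rw [List.getLast?_eq_getElem?, List.getElem?_eq_getElem (by omega : L.length - 1 < L.length)] at hlast
    simpa using hlast
  have hch : ∀ k, (hk : k + 1 < n) →
      stepTgt (L.get ⟨k, by omega⟩) = stepSrc (L.get ⟨k+1, hk⟩) ∧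
      stepCol (L.get ⟨k, by omega⟩) ≠ stepCol (L.get ⟨k+1, hk⟩) := by
    intro k hk
    exact List.isChain_iff_getElem.mp hchain k (by omega)
  set s := stepCol (L.get ⟨0, by omega⟩) with hs
  have hcol : ∀ k, (hk : k < n) → stepCol (L.get ⟨k, hk⟩) = colA s k := by
    intro k
    induction k with
    | zero => intro hk; rw [colA_zero]
    | succ m ih =>
      intro hk
      have h1 := (hch m hk).2
      have h2 := ih (by omega)
      rw [colA_succ, ← h2]
      rcases bool_eq_or (a := stepCol (L.get ⟨m+1, hk⟩))
        (b := stepCol (L.get ⟨m, by omega⟩)) with hc | hc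
      · exact absurd hc.symm h1
      · exact hc
  refine ⟨s, ?_, ?_, ?_, ?_, ?_⟩
  · unfold firstColour
    rw [List.head?_eq_getElem?, List.getElem?_eq_getElem (by omega : 0 < L.length)]
    rfl
  · unfold lastColour
    rw [List.getLast?_eq_getElem?, List.getElem?_eq_getElem (by omega : L.length - 1 < L.length)]
    have := hcol (n-1) (by omega)
    simp only [Option.map_some]
    exact congrArg some this
  · simp only [hn1, show (0:ℕ) < n from by omega, dif_pos]
    rw [dif_pos (show 0 < L.length by omega)]
    exact hh
  · simp only [lt_irrefl, dif_neg, not_lt, le_refl]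
    simp
  · intro k hk
    have hak := hadj (L.get ⟨k, hk⟩) (List.get_mem L ⟨k, hk⟩)
    rw [hcol k hk] at hak
    simp only [hk, dif_pos]
    by_cases hk1 : k + 1 < n
    · rw [dif_pos (show k + 1 < L.length from hk1)]
      rw [← (hch k hk1).1]
      exact hak
    · have : k + 1 = n := by omega
      rw [dif_neg (show ¬ (k + 1 < L.length) from hk1)]
      have hv : stepTgt (L.get ⟨k, hk⟩) = v := by
        have : (⟨k, hk⟩ : Fin L.length) = ⟨n-1, by omega⟩ := by
          congr 1; omega
        rw [this]; exact hl
      rw [← hv]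
      exact hak

end TwoEC


open TwoEC in
theorem completeMultipartite_colourConnected_iff_trailColourConnected {V : Type}
    (G : TwoEC V) (hcm : G.IsCompleteMultipartite) :
    G.ColourConnected ↔ G.TrailColourConnected := by
  obtain ⟨p, hp⟩ := hcm
  constructor
  · -- paths are trails
    intro h u v huv
    obtain ⟨P₁, P₂, hP₁, hP₂, hfc, hlc⟩ := h u v huv
    have key : ∀ P, G.IsAltPath u v P → ∃ T, G.IsAltTrail u v T ∧
        firstColour T = firstColour P ∧ lastColour T = lastColour P := by
      intro P hP
      obtain ⟨s, hfcP, hlcP, haw⟩ := hP.1.toAWx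
      set n := P.length with hn
      set x : ℕ → V := fun k => if hk : k < P.length then stepSrc (P.get ⟨k, hk⟩) else v with hx
      have hn1 : 1 ≤ n := List.length_pos_iff.mpr hP.1.1
      -- injectivity from the path condition
      have hinj : ∀ k l, k ≤ n → l ≤ n → x k = x l → k = l := by
        have hME : List.map stepSrc P ++ [v] = (List.range (n+1)).map x := by
          apply List.ext_getElem (by simp [hn])
          intro k h1 h2
          rw [List.getElem_map, List.getElem_range]
          by_cases hkn : k < n
          · rw [List.getElem_append_left (by simp only [List.length_map]; omega)]
            rw [List.getElem_map]
            simp only [hx]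
            rw [dif_pos (show k < P.length by omega)]
            simp [List.get_eq_getElem]
          · have hkn' : k = n := by
              simp only [List.length_append, List.length_map, List.length_singleton] at h1
              omega
            subst hkn'
            rw [List.getElem_append_right (by simp only [List.length_map]; omega)]
            simp only [hx]
            rw [dif_neg (show ¬ (n < P.length) by omega)]
            simp
        have hnd2 : ((List.range (n+1)).map x).Nodup := hME ▸ hP.2
        intro k l hk hl he
        exact List.inj_on_of_nodup_map hnd2 (List.mem_range.mpr (by omega))
          (List.mem_range.mpr (by omega)) he
      obtain ⟨T, hT, hTf, hTl⟩ := haw.toTrail hn1 hinj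
      exact ⟨T, hT, by rw [hTf, hfcP], by rw [hTl, hlcP]⟩
    obtain ⟨T₁, hT₁, hf₁, hl₁⟩ := key P₁ hP₁
    obtain ⟨T₂, hT₂, hf₂, hl₂⟩ := key P₂ hP₂
    exact ⟨T₁, T₂, hT₁, hT₂, by rw [hf₁, hf₂]; exact hfc, by rw [hl₁, hl₂]; exact hlc⟩
  · -- the hard direction
    intro h u v huv
    obtain ⟨T₁, T₂, hT₁, hT₂, hfc, hlc⟩ := h u v huv
    obtain ⟨s₁, hfc₁, hlc₁, haw₁⟩ := hT₁.1.toAWx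
    obtain ⟨s₂, hfc₂, hlc₂, haw₂⟩ := hT₂.1.toAWx
    set t₁ := colA s₁ (T₁.length - 1) with ht₁
    set t₂ := colA s₂ (T₂.length - 1) with ht₂
    have hs : s₂ = !s₁ := by
      rcases bool_eq_or (a := s₂) (b := s₁) with hc | hc
      · exact absurd (by rw [hfc₁, hfc₂, hc]) hfc.symm
      · exact hc
    have ht : t₂ = !t₁ := by
      rcases bool_eq_or (a := t₂) (b := t₁) with hc | hc
      · exact absurd (by rw [hlc₁, hlc₂, hc]) hlc.symm
      · exact hc
    have G1 : GoalP G u v s₁ t₁ := by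
      have := mainLemma G p hp T₁.length u v s₁ _ huv haw₁
      rwa [← ht₁] at this
    have G2 : GoalP G u v (!s₁) (!t₁) := by
      have := mainLemma G p hp T₂.length u v s₂ _ huv haw₂
      rwa [← ht₂, hs, ht] at this
    have final : PWx G u v s₁ t₁ ∧ PWx G u v (!s₁) (!t₁) ∨
        PWx G u v (!s₁) t₁ ∧ PWx G u v s₁ (!t₁) := by
      rcases G1 with h1 | h1
      · rcases G2 with h2 | h2
        · exact Or.inl ⟨h1, h2⟩
        · rw [Bool.not_not, Bool.not_not] at h2
          exact Or.inr ⟨h2.2, h2.1⟩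
      · exact Or.inr h1
    rcases final with ⟨h1, h2⟩ | ⟨h1, h2⟩
    · obtain ⟨P₁, hP₁, hf₁, hl₁⟩ := h1.toPath
      obtain ⟨P₂, hP₂, hf₂, hl₂⟩ := h2.toPath
      refine ⟨P₁, P₂, hP₁, hP₂, ?_, ?_⟩
      · rw [hf₁, hf₂]; simp
      · rw [hl₁, hl₂]; simp
    · obtain ⟨P₁, hP₁, hf₁, hl₁⟩ := h1.toPath
      obtain ⟨P₂, hP₂, hf₂, hl₂⟩ := h2.toPath
      refine ⟨P₁, P₂, hP₁, hP₂, ?_, ?_⟩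
      · rw [hf₁, hf₂]; simp
      · rw [hl₁, hl₂]; simp
end

section
/- Let C1 = x_1x_2...x_{2k}x_1 and C2 = y_1y_2...y_{2r}y_1 be vertex-disjoint alternating cycles in a 2-edge-coloured graph G. If there exist indices i,j such that the edges x_iy_j and x_{i+1}y_{j+1} exist in G and φ(x_iy_j) = φ(x_ix_{i+1}) = φ(x_{i+1}y_{j+1}) = φ(y_jy_{j+1}), then G contains an alternating cycle C with V(C) = V(C1) ∪ V(C2). -/
namespace ACmerge
open TwoEC List

variable {V : Type}

/-- The relation between consecutive steps of an alternating walk. -/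
def Rel : Step V → Step V → Prop :=
  fun s t => stepTgt s = stepSrc t ∧ stepCol s ≠ stepCol t

@[simp] lemma stepSrc_mk (a : V) (c : Bool) (b : V) : stepSrc (a, c, b) = a := rfl
@[simp] lemma stepTgt_mk (a : V) (c : Bool) (b : V) : stepTgt (a, c, b) = b := rfl
@[simp] lemma stepCol_mk (a : V) (c : Bool) (b : V) : stepCol (a, c, b) = c := rfl

/-- Reverse a step. -/
def rev (s : Step V) : Step V := (s.2.2, s.2.1, s.1)

@[simp] lemma src_rev (s : Step V) : stepSrc (rev s) = stepTgt s := rfl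
@[simp] lemma tgt_rev (s : Step V) : stepTgt (rev s) = stepSrc s := rfl
@[simp] lemma col_rev (s : Step V) : stepCol (rev s) = stepCol s := rfl

/-- Reverse a walk. -/
def revW (L : List (Step V)) : List (Step V) := (L.map rev).reverse

lemma revW_map_src (L : List (Step V)) :
    (revW L).map stepSrc = (L.map stepTgt).reverse := by
  simp only [revW, List.map_reverse, List.map_map]
  rfl

lemma revW_head? (L : List (Step V)) : (revW L).head? = L.getLast?.map rev := by
  simp [revW, List.head?_reverse, List.getLast?_map]

lemma revW_getLast? (L : List (Step V)) : (revW L).getLast? = L.head?.map rev := by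
  simp [revW, List.getLast?_reverse]

lemma revW_mem {L : List (Step V)} {x : Step V} (hx : x ∈ revW L) :
    ∃ y ∈ L, x = rev y := by
  simp only [revW, List.mem_reverse, List.mem_map] at hx
  obtain ⟨y, hy, rfl⟩ := hx
  exact ⟨y, hy, rfl⟩

lemma chain'_revW {L : List (Step V)} (h : L.Chain' Rel) : (revW L).Chain' Rel := by
  unfold List.Chain' at h ⊢
  rw [revW, List.isChain_reverse, List.isChain_map]
  refine h.imp ?_
  rintro a b ⟨h1, h2⟩
  exact ⟨h1.symm, Ne.symm h2⟩

/-- A convenient repackaging of `IsAltCycle`. -/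
def Cyc (G : TwoEC V) (L : List (Step V)) : Prop :=
  L ≠ [] ∧ (∀ s ∈ L, G.adj (stepCol s) (stepSrc s) (stepTgt s)) ∧
  L.Chain' Rel ∧ (∀ x ∈ L.getLast?, ∀ y ∈ L.head?, Rel x y) ∧
  (L.map stepSrc).Nodup

lemma cyc_iff (G : TwoEC V) (L : List (Step V)) : G.IsAltCycle L ↔ Cyc G L := by
  constructor
  · rintro ⟨⟨u, hne, hh, hl, hadj, hch⟩, hnd, hcol⟩
    refine ⟨hne, hadj, hch, ?_, hnd⟩
    intro x hx y hy
    rw [List.head?_eq_head hne] at hy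
    rw [List.getLast?_eq_getLast hne] at hx
    simp only [Option.mem_def, Option.some.injEq] at hx hy
    subst hx; subst hy
    constructor
    · rw [List.head?_eq_head hne] at hh
      rw [List.getLast?_eq_getLast hne] at hl
      simp only [Option.map_some] at hh hl
      rw [(Option.some.injEq _ _).mp hl, (Option.some.injEq _ _).mp hh]
    · intro hc
      apply hcol
      rw [lastColour, firstColour, List.head?_eq_head hne, List.getLast?_eq_getLast hne]
      simp [hc]
  · rintro ⟨hne, hadj, hch, hc, hnd⟩
    have hx := List.getLast?_eq_getLast hne
    have hy := List.head?_eq_head hne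
    have hrel : Rel (L.getLast hne) (L.head hne) := by
      apply hc <;> simp [hx, hy]
    refine ⟨⟨stepSrc (L.head hne), hne, ?_, ?_, hadj, hch⟩, hnd, ?_⟩
    · simp [hy]
    · simp [hx, hrel.1]
    · rw [lastColour, firstColour, hx, hy]
      simp only [Option.map_some, ne_eq, Option.some.injEq]
      exact hrel.2

/-- For a chain of steps, targets are a shift of sources. -/
lemma map_tgt_eq {L : List (Step V)} (hch : L.Chain' Rel) :
    ∀ x ∈ L.getLast?, L.map stepTgt = (L.map stepSrc).tail ++ [stepTgt x] := by
  induction L with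
  | nil => intro x hx; simp at hx
  | cons a l ih =>
    intro x hx
    cases l with
    | nil => simp_all
    | cons b m =>
      unfold List.Chain' at hch
      rw [List.isChain_cons_cons] at hch
      have hx' : x ∈ (b :: m).getLast? := by
        rwa [List.getLast?_cons_cons] at hx
      have := ih hch.2 x hx'
      simp only [List.map_cons, List.tail_cons] at this ⊢
      rw [this, hch.1.1]
      simp

lemma map_tgt_perm {G : TwoEC V} {L : List (Step V)} (h : Cyc G L) :
    (L.map stepTgt).Perm (L.map stepSrc) := by
  obtain ⟨hne, -, hch, hc, -⟩ := h
  have hx := List.getLast?_eq_getLast hne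
  have hy := List.head?_eq_head hne
  have hrel : Rel (L.getLast hne) (L.head hne) := by apply hc <;> simp [hx, hy]
  have h1 := map_tgt_eq hch (L.getLast hne) (by simp [hx])
  rw [h1, hrel.1]
  obtain ⟨a, l, rfl⟩ := List.exists_cons_of_ne_nil hne
  simp only [List.head_cons, List.map_cons, List.tail_cons]
  exact List.perm_append_comm

lemma visits_iff {G : TwoEC V} {L : List (Step V)} (h : Cyc G L) (v : V) :
    visits L v ↔ v ∈ L.map stepSrc := by
  unfold visits
  constructor
  · rintro (hv | hv)
    · exact hv
    · exact (map_tgt_perm h).mem_iff.mp hv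
  · exact Or.inl


lemma rot_ne {G : TwoEC V} {A B : List (Step V)} {s : Step V}
    (h : Cyc G (A ++ s :: B)) : B ++ A ≠ [] := by
  intro hBA
  rw [List.append_eq_nil_iff] at hBA
  obtain ⟨rfl, rfl⟩ : A = [] ∧ B = [] := ⟨hBA.2, hBA.1⟩
  obtain ⟨-, -, -, hc, -⟩ := h
  exact (hc s (by simp) s (by simp)).2 rfl

lemma rot {A B : List (Step V)} {s : Step V}
    (hch : (A ++ s :: B).Chain' Rel)
    (hc : ∀ x ∈ (A ++ s :: B).getLast?, ∀ y ∈ (A ++ s :: B).head?, Rel x y) :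
    (B ++ A).Chain' Rel ∧ (∀ y ∈ (B ++ A).head?, Rel s y) ∧
      (∀ x ∈ (B ++ A).getLast?, Rel x s) := by
  unfold List.Chain' at hch ⊢
  rw [List.isChain_append, List.isChain_cons] at hch
  obtain ⟨chA, ⟨hsB, chB⟩, hAs⟩ := hch
  rw [List.getLast?_append_cons] at hc
  refine ⟨?_, ?_, ?_⟩
  · rw [List.isChain_append]
    refine ⟨chB, chA, ?_⟩
    intro x hx y hy
    cases B with
    | nil => simp at hx
    | cons b B₂ =>
      refine hc x ?_ y ?_
      · rw [List.getLast?_cons_cons]; exact hx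
      · rw [List.head?_append]
        cases A with
        | nil => simp at hy
        | cons a A₂ => simpa using hy
  · intro y hy
    rw [List.head?_append] at hy
    cases B with
    | cons b B₂ =>
      have hy' : b = y := by simpa using hy
      subst hy'
      exact hsB b rfl
    | nil =>
      simp only [List.head?_nil, Option.none_or] at hy
      refine hc s (by simp) y ?_
      rw [List.head?_append]
      cases A with
      | nil => simp at hy
      | cons a A₂ => simpa using hy
  · intro x hx
    rw [List.getLast?_append] at hx
    cases A with
    | cons a A₂ =>
      rw [List.getLast?_eq_getLast (l := a :: A₂) (by simp)] at hx
      have hx' : (a :: A₂).getLast (by simp) = x := by simpa using hx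
      subst hx'
      exact hAs _ (by rw [List.getLast?_eq_getLast (l := a :: A₂) (by simp)]; rfl) s rfl
    | nil =>
      simp only [List.getLast?_nil, Option.none_or] at hx
      cases B with
      | nil => simp at hx
      | cons b B₂ =>
        refine hc x ?_ s ?_
        · rw [List.getLast?_cons_cons]; exact hx
        · simp

end ACmerge

open TwoEC in
theorem merge_cycles_of_parallel_same_colour_edges {V : Type} (G : TwoEC V)
    (C₁ C₂ : List (Step V)) (h₁ : G.IsAltCycle C₁) (h₂ : G.IsAltCycle C₂)
    (hdisj : ∀ v : V, ¬ (visits C₁ v ∧ visits C₂ v))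
    (h : ∃ s ∈ C₁, ∃ t ∈ C₂, stepCol s = stepCol t ∧
          G.adj (stepCol s) (stepSrc s) (stepSrc t) ∧
          G.adj (stepCol s) (stepTgt s) (stepTgt t)) :
    ∃ C, G.IsAltCycle C ∧ ∀ v : V, (visits C v ↔ visits C₁ v ∨ visits C₂ v) := by
  classical
  rw [ACmerge.cyc_iff] at h₁ h₂
  obtain ⟨s, hs, t, ht, hct, e1, e2⟩ := h
  obtain ⟨A, B, rfl⟩ := List.append_of_mem hs
  obtain ⟨A', B', rfl⟩ := List.append_of_mem ht
  obtain ⟨hne₁, hadj₁, hch₁, hc₁, hnd₁⟩ := id h₁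
  obtain ⟨hne₂, hadj₂, hch₂, hc₂, hnd₂⟩ := id h₂
  obtain ⟨chP, hsP, hPs⟩ := ACmerge.rot hch₁ hc₁
  obtain ⟨chR, htR, hRt⟩ := ACmerge.rot hch₂ hc₂
  have hPne : B ++ A ≠ [] := ACmerge.rot_ne h₁
  have hRne : B' ++ A' ≠ [] := ACmerge.rot_ne h₂
  set P : List (Step V) := B ++ A with hP
  set R : List (Step V) := B' ++ A' with hR
  set Q : List (Step V) := ACmerge.revW R with hQ
  have hQne : Q ≠ [] := by
    simp only [hQ, ACmerge.revW, ne_eq, List.reverse_eq_nil_iff, List.map_eq_nil_iff]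
    exact hRne
  set e₁ : Step V := (stepSrc s, stepCol s, stepSrc t) with he₁
  set e₂ : Step V := (stepTgt t, stepCol s, stepTgt s) with he₂
  set C : List (Step V) := P ++ e₁ :: (Q ++ [e₂]) with hC
  have hChead : C.head? = P.head? := by
    rw [hC, List.head?_append, List.head?_eq_head hPne]
    rfl
  have hClast : C.getLast? = some e₂ := by
    have hre : C = (P ++ e₁ :: Q) ++ [e₂] := by simp [hC]
    rw [hre, List.getLast?_concat]
  have hQh : Q.head? = some (ACmerge.rev (R.getLast hRne)) := by
    rw [hQ, ACmerge.revW_head?, List.getLast?_eq_getLast hRne]; rfl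
  have hQl : Q.getLast? = some (ACmerge.rev (R.head hRne)) := by
    rw [hQ, ACmerge.revW_getLast?, List.head?_eq_head hRne]; rfl
  have hgR : ACmerge.Rel (R.getLast hRne) t :=
    hRt _ (by rw [List.getLast?_eq_getLast hRne]; rfl)
  have htRh : ACmerge.Rel t (R.head hRne) :=
    htR _ (by rw [List.head?_eq_head hRne]; rfl)
  have hCsrc : C.map stepSrc =
      (P.map stepSrc ++ [stepSrc s]) ++ (Q.map stepSrc ++ [stepTgt t]) := by
    simp [hC, he₁, he₂]
  have permX : (P.map stepSrc ++ [stepSrc s]).Perm ((A ++ s :: B).map stepSrc) := by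
    rw [hP]
    simp only [List.map_append, List.map_cons]
    have t1 : ((List.map stepSrc B ++ List.map stepSrc A) ++ [stepSrc s]).Perm
        (stepSrc s :: (List.map stepSrc B ++ List.map stepSrc A)) := List.perm_append_comm
    have t2 : (stepSrc s :: (List.map stepSrc B ++ List.map stepSrc A)).Perm
        (stepSrc s :: (List.map stepSrc A ++ List.map stepSrc B)) :=
      List.perm_append_comm.cons _
    have t3 : (List.map stepSrc A ++ stepSrc s :: List.map stepSrc B).Perm
        (stepSrc s :: (List.map stepSrc A ++ List.map stepSrc B)) := List.perm_middle
    exact (t1.trans t2).trans t3.symm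
  have permY : (Q.map stepSrc ++ [stepTgt t]).Perm ((A' ++ t :: B').map stepSrc) := by
    have h1 : Q.map stepSrc = (R.map stepTgt).reverse := ACmerge.revW_map_src R
    rw [h1]
    refine (((R.map stepTgt).reverse_perm).append_right _).trans ?_
    refine (?_ : ((R.map stepTgt) ++ [stepTgt t]).Perm ((A' ++ t :: B').map stepTgt)).trans
      (ACmerge.map_tgt_perm h₂)
    rw [hR]
    simp only [List.map_append, List.map_cons]
    have t1 : ((List.map stepTgt B' ++ List.map stepTgt A') ++ [stepTgt t]).Perm
        (stepTgt t :: (List.map stepTgt B' ++ List.map stepTgt A')) := List.perm_append_comm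
    have t2 : (stepTgt t :: (List.map stepTgt B' ++ List.map stepTgt A')).Perm
        (stepTgt t :: (List.map stepTgt A' ++ List.map stepTgt B')) :=
      List.perm_append_comm.cons _
    have t3 : (List.map stepTgt A' ++ stepTgt t :: List.map stepTgt B').Perm
        (stepTgt t :: (List.map stepTgt A' ++ List.map stepTgt B')) := List.perm_middle
    exact (t1.trans t2).trans t3.symm
  have hCyc : ACmerge.Cyc G C := by
    refine ⟨by simp [hC], ?_, ?_, ?_, ?_⟩
    · -- adjacency
      intro x hx
      rw [hC] at hx
      simp only [List.mem_append, List.mem_cons, List.mem_singleton] at hx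
      rcases hx with hx | hx | hx | hx | hx
      · refine hadj₁ x ?_
        rw [hP, List.mem_append] at hx
        simp only [List.mem_append, List.mem_cons]
        tauto
      · subst hx; exact e1
      · obtain ⟨y, hy, rfl⟩ := ACmerge.revW_mem hx
        have hy' : y ∈ A' ++ t :: B' := by
          rw [hR, List.mem_append] at hy
          simp only [List.mem_append, List.mem_cons]
          tauto
        exact G.symm _ _ _ (hadj₂ y hy')
      · subst hx; exact G.symm _ _ _ e2
      · exact absurd hx List.not_mem_nil
    · -- the chain condition
      unfold List.Chain'
      rw [hC, List.isChain_append]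
      refine ⟨chP, ?_, ?_⟩
      · rw [List.isChain_cons]
        refine ⟨?_, ?_⟩
        · -- e₁ → head of Q ++ [e₂]
          intro y hy
          rw [List.head?_append, hQh] at hy
          have hy' : ACmerge.rev (R.getLast hRne) = y := by simpa using hy
          subst hy'
          exact ⟨hgR.1.symm, by simp [he₁]; rw [hct]; exact Ne.symm hgR.2⟩
        · rw [List.isChain_append]
          refine ⟨ACmerge.chain'_revW chR, List.isChain_singleton e₂, ?_⟩
          -- last of Q → e₂
          intro x hx y hy
          rw [hQl] at hx
          have hx' : ACmerge.rev (R.head hRne) = x := by simpa using hx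
          have hy' : e₂ = y := by simpa using hy
          subst hx'; subst hy'
          exact ⟨htRh.1.symm, by simp [he₂]; rw [hct]; exact Ne.symm htRh.2⟩
      · -- last of P → e₁
        intro x hx y hy
        have hy' : e₁ = y := by simpa using hy
        subst hy'
        exact hPs x hx
    · -- cyclic closing condition
      intro x hx y hy
      rw [hClast] at hx
      rw [hChead] at hy
      have hx' : e₂ = x := by simpa using hx
      subst hx'
      exact hsP y hy
    · -- nodup
      rw [hCsrc, List.nodup_append]
      refine ⟨permX.nodup_iff.mpr hnd₁, permY.nodup_iff.mpr hnd₂, ?_⟩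
      intro a haX b haY hab
      subst hab
      exact hdisj a ⟨Or.inl (permX.subset haX), Or.inl (permY.subset haY)⟩
  refine ⟨C, (ACmerge.cyc_iff G C).mpr hCyc, ?_⟩
  intro v
  rw [ACmerge.visits_iff hCyc, ACmerge.visits_iff h₁, ACmerge.visits_iff h₂,
    hCsrc, List.mem_append]
  exact or_congr permX.mem_iff permY.mem_iff
end

section
/- It is NP-complete to decide whether a given 2-edge-coloured graph is supereulerian, via the following reduction that is parsimonious in feasibility: given a 2-edge-coloured graph G, construct G' by adding for each vertex v new vertices v_r and v_b, replacing every red edge uv of G by a red edge u_rv_r and every blue edge uv by a blue edge u_bv_b, and adding a blue edge v_rv and a red edge vv_b for each v; then G' has a spanning closed alternating trail if and only if G has an alternating hamiltonian cycle. -/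
namespace TwoEC

/-- The graph `G'` of the NP-completeness reduction: vertex `(v, none)` is `v`,
`(v, some false)` is `v_r`, `(v, some true)` is `v_b`; every red edge `uv` of `G`
becomes the red edge `u_rv_r`, every blue edge `uv` becomes the blue edge `u_bv_b`,
and we add a blue edge `v_rv` and a red edge `vv_b` for every `v`
(red = `false`, blue = `true`). -/
def reduceG {V : Type} (G : TwoEC V) : TwoEC (V × Option Bool) where
  adj c p q :=
    (∃ u v, G.adj c u v ∧ p = (u, some c) ∧ q = (v, some c)) ∨
    (∃ v, c = true ∧
      ((p = (v, some false) ∧ q = (v, none)) ∨ (q = (v, some false) ∧ p = (v, none)))) ∨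
    (∃ v, c = false ∧
      ((p = (v, none) ∧ q = (v, some true)) ∨ (q = (v, none) ∧ p = (v, some true))))
  symm := by
    rintro c p q (⟨u, v, huv, rfl, rfl⟩ | ⟨v, hc, h⟩ | ⟨v, hc, h⟩)
    · exact Or.inl ⟨v, u, G.symm c u v huv, rfl, rfl⟩
    · exact Or.inr (Or.inl ⟨v, hc, h.symm⟩)
    · exact Or.inr (Or.inr ⟨v, hc, h.symm⟩)
  loopless := by
    rintro c p (⟨u, v, huv, rfl, h2⟩ | ⟨v, hc, (⟨rfl, h2⟩ | ⟨rfl, h2⟩)⟩ |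
      ⟨v, hc, (⟨rfl, h2⟩ | ⟨rfl, h2⟩)⟩) <;> simp_all [G.loopless]

end TwoEC

namespace TwoEC

open List

variable {V : Type}

lemma cyc_succ {α : Type*} {R : α → α → Prop} {L : List α} (hc : L.Chain' R)
    (hw : ∀ a ∈ L.getLast?, ∀ b ∈ L.head?, R a b) :
    ∀ s ∈ L, ∃ t ∈ L, R s t := by
  intro s hs
  obtain ⟨⟨i, hi⟩, rfl⟩ := List.mem_iff_get.1 hs
  by_cases h : i + 1 < L.length
  · exact ⟨L.get ⟨i+1, h⟩, L.get_mem _, (List.isChain_iff_getElem.1 hc) i (by omega)⟩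
  · have hne : L ≠ [] := List.ne_nil_of_length_pos (by omega)
    have h1 : L.get ⟨i, hi⟩ = L.getLast hne := by
      rw [List.getLast_eq_getElem]; simp only [List.get_eq_getElem]; congr 1; omega
    refine ⟨L.head hne, List.head_mem hne, ?_⟩
    rw [h1]
    exact hw _ (List.getLast?_eq_getLast hne ▸ rfl) _ (List.head?_eq_head hne ▸ rfl)

lemma cyc_pred {α : Type*} {R : α → α → Prop} {L : List α} (hc : L.Chain' R)
    (hw : ∀ a ∈ L.getLast?, ∀ b ∈ L.head?, R a b) :
    ∀ s ∈ L, ∃ t ∈ L, R t s := by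
  intro s hs
  obtain ⟨⟨i, hi⟩, rfl⟩ := List.mem_iff_get.1 hs
  rcases Nat.eq_zero_or_pos i with rfl | h
  · have hne : L ≠ [] := List.ne_nil_of_length_pos (by omega)
    have h1 : L.get ⟨0, hi⟩ = L.head hne := by
      simp [List.get_eq_getElem, List.head_eq_getElem]
    refine ⟨L.getLast hne, List.getLast_mem hne, ?_⟩
    rw [h1]
    exact hw _ (List.getLast?_eq_getLast hne ▸ rfl) _ (List.head?_eq_head hne ▸ rfl)
  · refine ⟨L.get ⟨i-1, by omega⟩, L.get_mem _, ?_⟩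
    have := (List.isChain_iff_getElem.1 hc) (i-1) (by omega)
    convert this using 3
    all_goals simp only [List.get_eq_getElem, Nat.sub_add_cancel (show 1 ≤ i by omega)]

lemma map_tgt_eq_aux {W : Type} {M : List (Step W)} (hne : M ≠ [])
    (hc : M.Chain' (fun s t => stepTgt s = stepSrc t)) :
    M.map stepTgt = (M.map stepSrc).tail ++ [stepTgt (M.getLast hne)] := by
  induction M with
  | nil => simp at hne
  | cons s rest ih =>
    cases rest with
    | nil => simp
    | cons t rest' =>
      obtain ⟨h1, h2⟩ := List.isChain_cons_cons.1 hc
      have := ih (by simp) h2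
      simp only [List.map_cons, List.tail_cons] at this ⊢
      rw [this, h1]
      simp [List.getLast]

lemma map_tgt_rotate {W : Type} {M : List (Step W)} (hne : M ≠ [])
    (hc : M.Chain' (fun s t => stepTgt s = stepSrc t))
    (hclose : stepTgt (M.getLast hne) = stepSrc (M.head hne)) :
    M.map stepTgt = (M.map stepSrc).rotate 1 := by
  cases M with
  | nil => simp at hne
  | cons s rest =>
    rw [map_tgt_eq_aux hne hc, hclose]
    simp [List.rotate_cons_succ]

lemma nodup_tgt_of_nodup_src {W : Type} {M : List (Step W)} (hne : M ≠ [])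
    (hc : M.Chain' (fun s t => stepTgt s = stepSrc t))
    (hclose : stepTgt (M.getLast hne) = stepSrc (M.head hne))
    (h : (M.map stepSrc).Nodup) : (M.map stepTgt).Nodup := by
  rw [map_tgt_rotate hne hc hclose]; exact List.nodup_rotate.2 h

lemma nodup_src_of_nodup_tgt {W : Type} {M : List (Step W)} (hne : M ≠ [])
    (hc : M.Chain' (fun s t => stepTgt s = stepSrc t))
    (hclose : stepTgt (M.getLast hne) = stepSrc (M.head hne))
    (h : (M.map stepTgt).Nodup) : (M.map stepSrc).Nodup := by
  rw [map_tgt_rotate hne hc hclose] at h; exact List.nodup_rotate.1 h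

lemma mem_tgt_iff_mem_src {W : Type} {M : List (Step W)} (hne : M ≠ [])
    (hc : M.Chain' (fun s t => stepTgt s = stepSrc t))
    (hclose : stepTgt (M.getLast hne) = stepSrc (M.head hne)) (v : W) :
    v ∈ M.map stepTgt ↔ v ∈ M.map stepSrc := by
  rw [map_tgt_rotate hne hc hclose]; exact List.mem_rotate

lemma flatMap_ne_nil' {α β : Type*} {f : α → List β} {M : List α} (hne : M ≠ [])
    (hf : ∀ a ∈ M, f a ≠ []) : M.flatMap f ≠ [] := by
  cases M with
  | nil => simp at hne
  | cons a rest =>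
    rw [List.flatMap_cons]
    intro h
    rcases List.append_eq_nil_iff.1 h with ⟨h1, -⟩
    exact hf a (by simp) h1

lemma flatMap_head?' {α β : Type*} {f : α → List β} {M : List α} (hne : M ≠ [])
    (hf : ∀ a ∈ M, f a ≠ []) : (M.flatMap f).head? = (f (M.head hne)).head? := by
  cases M with
  | nil => simp at hne
  | cons a rest =>
    rw [List.flatMap_cons, List.head?_append_of_ne_nil _ (hf a (by simp))]
    simp

lemma flatMap_getLast?' {α β : Type*} {f : α → List β} {M : List α} (hne : M ≠ [])
    (hf : ∀ a ∈ M, f a ≠ []) : (M.flatMap f).getLast? = (f (M.getLast hne)).getLast? := by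
  induction M with
  | nil => simp at hne
  | cons a rest ih =>
    cases rest with
    | nil => simp
    | cons b rest' =>
      rw [List.flatMap_cons,
        List.getLast?_append_of_ne_nil _ (flatMap_ne_nil' (by simp) (fun x hx => hf x (by simp [hx]))),
        ih (by simp) (fun x hx => hf x (by simp [hx]))]
      simp [List.getLast]

lemma chain'_flatMap' {α β : Type*} {R : β → β → Prop} {f : α → List β} {M : List α}
    (hf : ∀ a ∈ M, f a ≠ [])
    (hchunk : ∀ a ∈ M, (f a).Chain' R)
    (hlink : M.Chain' (fun a b => ∀ x ∈ (f a).getLast?, ∀ y ∈ (f b).head?, R x y)) :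
    (M.flatMap f).Chain' R := by
  induction M with
  | nil => simp [List.Chain']
  | cons a rest ih =>
    unfold List.Chain'
    rw [List.flatMap_cons, List.isChain_append]
    refine ⟨hchunk a (by simp), ih (fun x hx => hf x (by simp [hx]))
      (fun x hx => hchunk x (by simp [hx])) hlink.tail, ?_⟩
    intro x hx y hy
    cases rest with
    | nil => simp at hy
    | cons b rest' =>
      rw [flatMap_head?' (by simp) (fun z hz => hf z (by simp [hz]))] at hy
      exact (List.isChain_cons_cons.1 hlink).1 x hx y (by simpa using hy)

/-- The expansion of one step of a walk in `G` into three steps of `reduceG G`. -/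
def expandStep (s : Step V) : List (Step (V × Option Bool)) :=
  [((stepSrc s, some (stepCol s)), stepCol s, (stepTgt s, some (stepCol s))),
   ((stepTgt s, some (stepCol s)), !(stepCol s), (stepTgt s, none)),
   ((stepTgt s, none), stepCol s, (stepTgt s, some (!(stepCol s))))]

lemma expandStep_ne_nil (s : Step V) : expandStep s ≠ [] := by simp [expandStep]

lemma adj_GE (G : TwoEC V) {c : Bool} {u v : V} (h : G.adj c u v) :
    (reduceG G).adj c (u, some c) (v, some c) := Or.inl ⟨u, v, h, rfl, rfl⟩

lemma adj_pend_down (G : TwoEC V) (v : V) (b : Bool) :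
    (reduceG G).adj (!b) (v, some b) (v, none) := by
  cases b
  · exact Or.inr (Or.inl ⟨v, rfl, Or.inl ⟨rfl, rfl⟩⟩)
  · exact Or.inr (Or.inr ⟨v, rfl, Or.inr ⟨rfl, rfl⟩⟩)

lemma adj_pend_up (G : TwoEC V) (v : V) (b : Bool) :
    (reduceG G).adj (!b) (v, none) (v, some b) :=
  (reduceG G).symm _ _ _ (adj_pend_down G v b)

lemma adj_cases {G : TwoEC V} {c : Bool} {p q : V × Option Bool} (h : (reduceG G).adj c p q) :
    (∃ u v, G.adj c u v ∧ p = (u, some c) ∧ q = (v, some c)) ∨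
    (∃ v, (p = (v, some (!c)) ∧ q = (v, none)) ∨ (p = (v, none) ∧ q = (v, some (!c)))) := by
  rcases h with h | ⟨v, rfl, h | h⟩ | ⟨v, rfl, h | h⟩
  · exact Or.inl h
  · exact Or.inr ⟨v, Or.inl ⟨h.1, h.2⟩⟩
  · exact Or.inr ⟨v, Or.inr ⟨h.2, h.1⟩⟩
  · exact Or.inr ⟨v, Or.inr ⟨h.1, h.2⟩⟩
  · exact Or.inr ⟨v, Or.inl ⟨h.2, h.1⟩⟩

lemma step_from_level {G : TwoEC V} {c : Bool} {u : V} {q : V × Option Bool}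
    (h : (reduceG G).adj c (u, some c) q) : ∃ v, G.adj c u v ∧ q = (v, some c) := by
  rcases adj_cases h with ⟨u', v, ha, hp, hq⟩ | ⟨v, ⟨hp, hq⟩ | ⟨hp, hq⟩⟩
  · obtain ⟨rfl, -⟩ := Prod.mk.injEq .. ▸ hp
    exact ⟨v, ha, hq⟩
  · simp [Prod.ext_iff] at hp
  · simp [Prod.ext_iff] at hp

lemma step_from_down {G : TwoEC V} {c : Bool} {u : V} {q : V × Option Bool}
    (h : (reduceG G).adj (!c) (u, some c) q) : q = (u, none) := by
  rcases adj_cases h with ⟨u', v, ha, hp, hq⟩ | ⟨v, ⟨hp, hq⟩ | ⟨hp, hq⟩⟩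
  · rw [Prod.ext_iff] at hp; simp at hp
  · rw [Prod.ext_iff] at hp; simp at hp
    obtain ⟨rfl, -⟩ := hp
    exact hq
  · rw [Prod.ext_iff] at hp; simp at hp

lemma step_from_none {G : TwoEC V} {c : Bool} {v : V} {q : V × Option Bool}
    (h : (reduceG G).adj c (v, none) q) : q = (v, some (!c)) := by
  rcases adj_cases h with ⟨u', w, ha, hp, hq⟩ | ⟨w, ⟨hp, hq⟩ | ⟨hp, hq⟩⟩
  · rw [Prod.ext_iff] at hp; simp at hp
  · rw [Prod.ext_iff] at hp; simp at hp
  · rw [Prod.ext_iff] at hp; simp at hp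
    obtain rfl := hp
    exact hq

lemma adj_of_GE {G : TwoEC V} {c : Bool} {u v : V}
    (h : (reduceG G).adj c (u, some c) (v, some c)) : G.adj c u v := by
  obtain ⟨v', ha, hq⟩ := step_from_level h
  rw [Prod.ext_iff] at hq; simp at hq
  exact hq ▸ ha

lemma expand_edges_disjoint {a b : Step V}
    (htgt : stepTgt a ≠ stepTgt b)
    (hcolab : stepTgt a = stepSrc b → stepCol b ≠ stepCol a)
    (hcolba : stepTgt b = stepSrc a → stepCol a ≠ stepCol b) :
    List.Disjoint ((expandStep a).map stepEdge) ((expandStep b).map stepEdge) := by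
  intro e he het
  simp only [expandStep, List.map_cons, List.map_nil, List.mem_cons, List.not_mem_nil,
    or_false] at he het
  rcases he with rfl | rfl | rfl <;> rcases het with h | h | h <;>
    simp only [stepEdge, Prod.mk.injEq, Sym2.eq_iff, Prod.ext_iff, Option.some.injEq,
      reduceCtorEq, and_false, false_and, and_true, true_and, or_false, false_or] at h <;>
    tauto

lemma expand_chunk_nodup (s : Step V) : ((expandStep s).map stepEdge).Nodup := by
  cases hc : stepCol s <;>
    simp [expandStep, stepEdge, Sym2.eq_iff, hc, Prod.ext_iff]

lemma forward {G : TwoEC V} {L : List (Step V)} (h : G.IsAltHamCycle L) :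
    (reduceG G).Supereulerian := by
  obtain ⟨⟨⟨u, hne, hhead, hlast, hadj, hchain⟩, hnodup, hwrap⟩, hspan⟩ := h
  have hheadq : L.head? = some (L.head hne) := List.head?_eq_head hne
  have hlastq : L.getLast? = some (L.getLast hne) := List.getLast?_eq_getLast hne
  set hd := L.head hne with hhd
  set lst := L.getLast hne with hlst
  rw [hheadq] at hhead
  rw [hlastq] at hlast
  simp only [Option.map_some, Option.some.injEq] at hhead hlast
  have hcolwrap : stepCol lst ≠ stepCol hd := by
    simp only [lastColour, firstColour, hheadq, hlastq, Option.map_some, ne_eq,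
      Option.some.injEq] at hwrap
    exact hwrap
  have hclose : stepTgt lst = stepSrc hd := hlast.trans hhead.symm
  have hwrapR : ∀ a ∈ L.getLast?, ∀ b ∈ L.head?,
      stepTgt a = stepSrc b ∧ stepCol a ≠ stepCol b := by
    rw [hheadq, hlastq]
    rintro a ha b hb
    simp only [Option.mem_def, Option.some.injEq] at ha hb
    subst ha; subst hb
    exact ⟨hclose, hcolwrap⟩
  have claimA : ∀ s ∈ L, ∀ t ∈ L, stepTgt s = stepSrc t → stepCol t ≠ stepCol s := by
    intro s hs t ht hst
    obtain ⟨t₀, ht₀, h1, h2⟩ := cyc_succ hchain hwrapR s hs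
    have : t = t₀ := List.inj_on_of_nodup_map hnodup ht ht₀ (by rw [← hst, h1])
    subst this
    exact Ne.symm h2
  have hchainT : L.Chain' (fun s t => stepTgt s = stepSrc t) :=
    hchain.imp (fun a b hab => hab.1)
  have htgtnodup : (L.map stepTgt).Nodup := nodup_tgt_of_nodup_src hne hchainT hclose hnodup
  have htgtPW : L.Pairwise (fun s t => stepTgt s ≠ stepTgt t) := List.pairwise_map.1 htgtnodup
  have hfne : ∀ a ∈ L, expandStep a ≠ [] := fun a _ => expandStep_ne_nil a
  refine ⟨L.flatMap expandStep, ⟨(u, some (stepCol hd)), ⟨⟨?_, ?_, ?_, ?_, ?_⟩, ?_⟩, ?_⟩, ?_⟩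
  · exact flatMap_ne_nil' hne hfne
  · rw [flatMap_head?' hne hfne]
    simp only [expandStep, List.head?_cons, Option.map_some, Option.some.injEq]
    exact congrArg (fun x => (x, some (stepCol hd))) hhead
  · rw [flatMap_getLast?' hne hfne]
    have hbc : (!stepCol lst) = stepCol hd := by
      cases h1 : stepCol lst <;> cases h2 : stepCol hd <;> simp_all
    simp only [expandStep, List.getLast?_cons_cons, List.getLast?_singleton, Option.map_some,
      Option.some.injEq]
    rw [show stepTgt ((stepTgt lst, none), stepCol lst, (stepTgt lst, some (!stepCol lst))) =
      (stepTgt lst, some (!stepCol lst)) from rfl, hlast, hbc]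
  · intro s' hs'
    rw [List.mem_flatMap] at hs'
    obtain ⟨s, hs, hmem⟩ := hs'
    simp only [expandStep, List.mem_cons, List.not_mem_nil, or_false] at hmem
    rcases hmem with rfl | rfl | rfl
    · exact adj_GE G (hadj s hs)
    · exact adj_pend_down G (stepTgt s) (stepCol s)
    · simpa [stepCol, stepSrc, stepTgt] using adj_pend_up G (stepTgt s) (!(stepCol s))
  · refine chain'_flatMap' hfne ?_ ?_
    · intro a _
      simp [expandStep, List.Chain', List.isChain_cons_cons, stepTgt, stepSrc, stepCol]
    · refine hchain.imp (fun a b hab => ?_)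
      intro x hx y hy
      simp only [expandStep, List.getLast?_cons_cons, List.getLast?_singleton, List.head?_cons,
        Option.mem_def, Option.some.injEq] at hx hy
      subst hx; subst hy
      have hcb : stepCol b = !stepCol a := by
        have h2 := hab.2
        cases h1 : stepCol a <;> cases h3 : stepCol b <;> simp_all
      refine ⟨?_, ?_⟩
      · simp only [stepTgt, stepSrc, hcb]
        exact congrArg (fun x => (x, some (!stepCol a))) hab.1
      · simp only [stepCol, hcb]
        exact hab.2
  · rw [List.map_flatMap, List.nodup_flatMap]
    refine ⟨fun s _ => expand_chunk_nodup s, ?_⟩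
    refine List.Pairwise.imp_of_mem ?_ htgtPW
    intro a b ha hb hab
    exact expand_edges_disjoint hab (claimA a ha b hb) (claimA b hb a ha)
  · rw [lastColour, firstColour, flatMap_getLast?' hne hfne, flatMap_head?' hne hfne]
    simp only [expandStep, List.getLast?_cons_cons, List.getLast?_singleton, List.head?_cons,
      Option.map_some, ne_eq, Option.some.injEq]
    exact hcolwrap
  · rintro ⟨v, o⟩
    have hv : v ∈ L.map stepTgt := by
      rcases hspan v with hv | hv
      · exact (mem_tgt_iff_mem_src hne hchainT hclose v).2 hv
      · exact hv
    rw [List.mem_map] at hv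
    obtain ⟨s, hs, rfl⟩ := hv
    refine Or.inr ?_
    rw [List.map_flatMap, List.mem_flatMap]
    refine ⟨s, hs, ?_⟩
    match o with
    | none => simp [expandStep, stepTgt]
    | some b => cases b <;> cases hcs : stepCol s <;> simp [expandStep, stepTgt, hcs]

lemma closedAltTrail_rotate {W : Type} (H : TwoEC W) {A B : List (Step W)} (hB : B ≠ [])
    (h : H.IsClosedAltTrail (A ++ B)) : H.IsClosedAltTrail (B ++ A) := by
  rcases eq_or_ne A [] with rfl | hA
  · simpa using h
  obtain ⟨u, ⟨⟨hne, hhead, hlast, hadj, hchain⟩, hnodup⟩, hwrap⟩ := h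
  have hheadA : A.head? = some (A.head hA) := List.head?_eq_head hA
  have hheadB : B.head? = some (B.head hB) := List.head?_eq_head hB
  have hlastA : A.getLast? = some (A.getLast hA) := List.getLast?_eq_getLast hA
  have hlastB : B.getLast? = some (B.getLast hB) := List.getLast?_eq_getLast hB
  rw [List.head?_append_of_ne_nil _ hA, hheadA] at hhead
  rw [List.getLast?_append_of_ne_nil _ hB, hlastB] at hlast
  simp only [Option.map_some, Option.some.injEq] at hhead hlast
  have hwrapc : stepCol (B.getLast hB) ≠ stepCol (A.head hA) := by
    simp only [lastColour, firstColour, List.head?_append_of_ne_nil _ hA,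
      List.getLast?_append_of_ne_nil _ hB, hheadA, hlastB, Option.map_some, ne_eq,
      Option.some.injEq] at hwrap
    exact hwrap
  obtain ⟨hcA, hcB, hlink⟩ := List.isChain_append.1 hchain
  have hlinkAB := hlink _ (by rw [hlastA]; rfl) _ (by rw [hheadB]; rfl)
  refine ⟨stepSrc (B.head hB), ⟨⟨by simp [hB], ?_, ?_, ?_, ?_⟩, ?_⟩, ?_⟩
  · rw [List.head?_append_of_ne_nil _ hB, hheadB]
    rfl
  · rw [List.getLast?_append_of_ne_nil _ hA, hlastA]
    simp only [Option.map_some, Option.some.injEq]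
    exact hlinkAB.1
  · intro s hs
    rw [List.mem_append] at hs
    exact hadj s (List.mem_append.2 hs.symm)
  · refine List.isChain_append.2 ⟨hcB, hcA, ?_⟩
    rw [hlastB, hheadA]
    intro x hx y hy
    rw [Option.mem_def, Option.some.injEq] at hx hy
    subst hx; subst hy
    exact ⟨hlast.trans hhead.symm, hwrapc⟩
  · rw [List.map_append]
    rw [List.map_append] at hnodup
    exact List.perm_append_comm.nodup_iff.2 hnodup
  · simp only [lastColour, firstColour, List.head?_append_of_ne_nil _ hB,
      List.getLast?_append_of_ne_nil _ hA, hheadB, hlastA, Option.map_some, ne_eq,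
      Option.some.injEq]
    exact hlinkAB.2

lemma bool_eq_not {a b : Bool} (h : a ≠ b) : a = !b := by cases a <;> cases b <;> simp_all

lemma parse {G : TwoEC V} :
    ∀ n (T : List (Step (V × Option Bool))), T.length = n → T ≠ [] →
    (∀ s ∈ T, (reduceG G).adj (stepCol s) (stepSrc s) (stepTgt s)) →
    T.Chain' (fun s t => stepTgt s = stepSrc t ∧ stepCol s ≠ stepCol t) →
    (∃ s u c, T.head? = some s ∧ stepSrc s = (u, some c) ∧ stepCol s = c) →
    (∃ s w b, T.getLast? = some s ∧ stepTgt s = (w, some b) ∧ stepCol s = !b) →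
    ∃ M : List (Step V), M ≠ [] ∧ T = M.flatMap expandStep := by
  intro n
  induction n using Nat.strong_induction_on with
  | _ n ih =>
  intro T hlen hne hadj hchain hhead hlast
  cases T with
  | nil => exact absurd rfl hne
  | cons s₁ rest =>
  obtain ⟨s₁', u, c, hs₁, hsrc₁, hcol₁⟩ := hhead
  rw [List.head?_cons, Option.some.injEq] at hs₁
  subst hs₁
  -- first step is a G-edge step
  have ha₁ := hadj s₁ (by simp)
  rw [hsrc₁, hcol₁] at ha₁
  obtain ⟨v, hGuv, htgt₁⟩ := step_from_level ha₁
  cases rest with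
  | nil =>
    -- impossible: single GE step can't satisfy the last-step invariant
    obtain ⟨s, w, b, hs, htgt, hcol⟩ := hlast
    simp only [List.getLast?_singleton, Option.some.injEq] at hs
    subst hs
    rw [htgt₁] at htgt
    rw [Prod.ext_iff] at htgt
    simp only [Option.some.injEq] at htgt
    obtain ⟨-, rfl⟩ := htgt
    rw [hcol₁] at hcol
    exact absurd hcol (by simp)
  | cons s₂ rest2 =>
  obtain ⟨hR12, hchain2⟩ := List.isChain_cons_cons.1 hchain
  have hsrc₂ : stepSrc s₂ = (v, some c) := by rw [← hR12.1, htgt₁]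
  have hcol₂ : stepCol s₂ = !c := by
    have := hR12.2; rw [hcol₁] at this; exact (bool_eq_not (Ne.symm this))
  have ha₂ := hadj s₂ (by simp)
  rw [hsrc₂, hcol₂] at ha₂
  have htgt₂ : stepTgt s₂ = (v, none) := step_from_down ha₂
  cases rest2 with
  | nil =>
    obtain ⟨s, w, b, hs, htgt, hcol⟩ := hlast
    have : s = s₂ := by
      simp only [List.getLast?_cons_cons, List.getLast?_singleton, Option.some.injEq] at hs
      exact hs.symm
    subst this
    rw [htgt₂, Prod.ext_iff] at htgt
    simp at htgt
  | cons s₃ rest3 =>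
  obtain ⟨hR23, hchain3⟩ := List.isChain_cons_cons.1 hchain2
  have hsrc₃ : stepSrc s₃ = (v, none) := by rw [← hR23.1, htgt₂]
  have hcol₃ : stepCol s₃ = c := by
    have := hR23.2; rw [hcol₂] at this
    have := bool_eq_not (Ne.symm this); rwa [Bool.not_not] at this
  have ha₃ := hadj s₃ (by simp)
  rw [hsrc₃, hcol₃] at ha₃
  have htgt₃ : stepTgt s₃ = (v, some (!c)) := step_from_none ha₃
  have hs₁eq : s₁ = ((u, some c), c, (v, some c)) := by
    calc s₁ = (s₁.1, s₁.2.1, s₁.2.2) := rfl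
    _ = _ := by rw [show s₁.1 = _ from hsrc₁, show s₁.2.1 = _ from hcol₁, show s₁.2.2 = _ from htgt₁]
  have hs₂eq : s₂ = ((v, some c), !c, (v, none)) := by
    calc s₂ = (s₂.1, s₂.2.1, s₂.2.2) := rfl
    _ = _ := by rw [show s₂.1 = _ from hsrc₂, show s₂.2.1 = _ from hcol₂, show s₂.2.2 = _ from htgt₂]
  have hs₃eq : s₃ = ((v, none), c, (v, some (!c))) := by
    calc s₃ = (s₃.1, s₃.2.1, s₃.2.2) := rfl
    _ = _ := by rw [show s₃.1 = _ from hsrc₃, show s₃.2.1 = _ from hcol₃, show s₃.2.2 = _ from htgt₃]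
  have hexp : expandStep (u, c, v) = [s₁, s₂, s₃] := by
    rw [hs₁eq, hs₂eq, hs₃eq]; rfl
  cases rest3 with
  | nil =>
    exact ⟨[(u, c, v)], by simp, by simp [hexp]⟩
  | cons s₄ rest4 =>
  have hR34 := (List.isChain_cons_cons.1 hchain3).1
  have hsrc₄ : stepSrc s₄ = (v, some (!c)) := by rw [← hR34.1, htgt₃]
  have hcol₄ : stepCol s₄ = !c := by
    have := hR34.2; rw [hcol₃] at this; exact bool_eq_not (Ne.symm this)
  obtain ⟨M', hM'ne, hM'eq⟩ := ih (n - 3) (by simp at hlen; omega) (s₄ :: rest4)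
    (by simp at hlen ⊢; omega)
    (by simp) (fun s hs => hadj s (by simp at hs ⊢; tauto)) hchain3.tail
    ⟨s₄, v, !c, by simp, hsrc₄, hcol₄⟩
    (by
      obtain ⟨s, w, b, hs, htgt, hcol⟩ := hlast
      refine ⟨s, w, b, ?_, htgt, hcol⟩
      rw [show s₁ :: s₂ :: s₃ :: s₄ :: rest4 = [s₁, s₂, s₃] ++ s₄ :: rest4 from rfl,
        List.getLast?_append_of_ne_nil _ (by simp)] at hs
      exact hs)
  refine ⟨(u, c, v) :: M', by simp, ?_⟩
  rw [List.flatMap_cons, hexp, ← hM'eq]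
  rfl

lemma chain'_of_flatMap {α β : Type*} {R : β → β → Prop} {f : α → List β} :
    ∀ {M : List α}, (∀ a ∈ M, f a ≠ []) → (M.flatMap f).Chain' R →
    M.Chain' (fun a b => ∀ x ∈ (f a).getLast?, ∀ y ∈ (f b).head?, R x y) := by
  intro M
  induction M with
  | nil => intro _ _; simp [List.Chain']
  | cons a rest ih =>
    intro hf h
    cases rest with
    | nil => simp [List.Chain']
    | cons b rest2 =>
      unfold List.Chain' at h
      rw [List.flatMap_cons, List.isChain_append] at h
      obtain ⟨h1, h2, h3⟩ := h
      refine List.isChain_cons_cons.2 ⟨?_, ih (fun x hx => hf x (by simp [hx])) h2⟩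
      intro x hx y hy
      refine h3 x hx y ?_
      rw [flatMap_head?' (by simp) (fun z hz => hf z (by simp [hz]))]
      exact hy

lemma expand_common_edge {a b : Step V} (h : stepTgt a = stepTgt b) :
    ∃ e, e ∈ (expandStep a).map stepEdge ∧ e ∈ (expandStep b).map stepEdge := by
  rcases eq_or_ne (stepCol a) (stepCol b) with hc | hc
  · exact ⟨stepEdge ((stepTgt a, some (stepCol a)), !(stepCol a), (stepTgt a, none)),
      by simp [expandStep], by simp [expandStep, h, hc]⟩
  · refine ⟨stepEdge ((stepTgt a, some (stepCol a)), !(stepCol a), (stepTgt a, none)),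
      by simp [expandStep], ?_⟩
    have hcb : stepCol a = !stepCol b := bool_eq_not hc
    have heq : stepEdge ((stepTgt a, some (stepCol a)), !(stepCol a), (stepTgt a, none)) =
        stepEdge ((stepTgt b, none), stepCol b, (stepTgt b, some (!(stepCol b)))) := by
      simp only [stepEdge, h, hcb, Bool.not_not, Prod.mk.injEq]
      exact ⟨trivial, Sym2.eq_swap⟩
    rw [heq]
    simp [expandStep]

lemma transfer {G : TwoEC V} {M : List (Step V)} (hMne : M ≠ [])
    (h : (reduceG G).IsClosedAltTrail (M.flatMap expandStep))
    (hspan : ∀ p, visits (M.flatMap expandStep) p) :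
    G.IsAltHamCycle M := by
  obtain ⟨u', ⟨⟨hne, hhead, hlast, hadj, hchain⟩, hnodup⟩, hwrap⟩ := h
  have hfne : ∀ a ∈ M, expandStep a ≠ [] := fun a _ => expandStep_ne_nil a
  rw [flatMap_head?' hMne hfne] at hhead
  rw [flatMap_getLast?' hMne hfne] at hlast
  simp only [expandStep, List.head?_cons, List.getLast?_cons_cons, List.getLast?_singleton,
    Option.map_some, Option.some.injEq, stepSrc, stepTgt, stepCol] at hhead hlast
  have hkey := hlast.trans hhead.symm
  rw [Prod.ext_iff] at hkey
  simp only [Option.some.injEq] at hkey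
  have hkey1 : stepTgt (M.getLast hMne) = stepSrc (M.head hMne) := hkey.1
  have hkey2 : stepCol (M.head hMne) = !stepCol (M.getLast hMne) := hkey.2.symm
  have hchainM : M.Chain' (fun s t => stepTgt s = stepSrc t ∧ stepCol s ≠ stepCol t) := by
    have hM := chain'_of_flatMap hfne hchain
    refine hM.imp (fun a b hab => ?_)
    have h3 := hab ((stepTgt a, none), stepCol a, (stepTgt a, some (!(stepCol a))))
      (by simp [expandStep])
      ((stepSrc b, some (stepCol b)), stepCol b, (stepTgt b, some (stepCol b)))
      (by simp [expandStep])
    obtain ⟨heq, hnecol⟩ := h3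
    simp only [stepTgt, stepSrc] at heq
    rw [Prod.ext_iff] at heq
    exact ⟨heq.1, hnecol⟩
  have hchainT : M.Chain' (fun s t => stepTgt s = stepSrc t) :=
    hchainM.imp (fun a b hab => hab.1)
  refine ⟨⟨⟨stepSrc (M.head hMne), hMne, ?_, ?_, ?_, hchainM⟩, ?_, ?_⟩, ?_⟩
  · rw [List.head?_eq_head hMne]
    simp
  · rw [List.getLast?_eq_getLast hMne]
    simp only [Option.map_some, Option.some.injEq]
    exact hkey1
  · intro s hs
    have hmem : ((stepSrc s, some (stepCol s)), stepCol s, (stepTgt s, some (stepCol s))) ∈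
        M.flatMap expandStep := List.mem_flatMap.2 ⟨s, hs, by simp [expandStep]⟩
    exact adj_of_GE (hadj _ hmem)
  · -- nodup of sources
    rw [List.map_flatMap] at hnodup
    obtain ⟨-, hdisj⟩ := List.nodup_flatMap.1 hnodup
    have hPW : M.Pairwise (fun a b => stepTgt a ≠ stepTgt b) := by
      refine hdisj.imp (fun hD heq => ?_)
      obtain ⟨e, he1, he2⟩ := expand_common_edge heq
      exact hD he1 he2
    exact nodup_src_of_nodup_tgt hMne hchainT hkey1 (List.pairwise_map.2 hPW)
  · simp only [lastColour, firstColour, List.head?_eq_head hMne,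
      List.getLast?_eq_getLast hMne, Option.map_some, ne_eq, Option.some.injEq]
    intro hcc
    rw [hkey2] at hcc
    simp at hcc
  · intro v
    have hv : v ∈ M.map stepTgt := by
      rcases hspan (v, none) with hmem | hmem <;>
        first
        | (rw [List.mem_map] at hmem
           obtain ⟨t, ht, hteq⟩ := hmem
           rw [List.mem_flatMap] at ht
           obtain ⟨s, hs, hts⟩ := ht
           simp only [expandStep, List.mem_cons, List.not_mem_nil, or_false] at hts
           refine List.mem_map.2 ⟨s, hs, ?_⟩
           rcases hts with rfl | rfl | rfl <;>
             simp_all [stepSrc, stepTgt, Prod.ext_iff])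
    exact Or.inr hv

lemma backward {G : TwoEC V} (h : (reduceG G).Supereulerian) : ∃ L, G.IsAltHamCycle L := by
  obtain ⟨T, hT, hspan⟩ := h
  have hGE : ∃ s ∈ T, ∃ u c, stepSrc s = (u, some c) ∧ stepCol s = c := by
    obtain ⟨u', ⟨⟨hne, hhead, hlast, hadj, hchain⟩, hnodup⟩, hwrap⟩ := hT
    have hheadq : T.head? = some (T.head hne) := List.head?_eq_head hne
    have hlastq : T.getLast? = some (T.getLast hne) := List.getLast?_eq_getLast hne
    rw [hheadq] at hhead; rw [hlastq] at hlast
    simp only [Option.map_some, Option.some.injEq] at hhead hlast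
    have hcolwrap : stepCol (T.getLast hne) ≠ stepCol (T.head hne) := by
      simp only [lastColour, firstColour, hheadq, hlastq, Option.map_some, ne_eq,
        Option.some.injEq] at hwrap
      exact hwrap
    have hwrapR : ∀ a ∈ T.getLast?, ∀ b ∈ T.head?,
        stepTgt a = stepSrc b ∧ stepCol a ≠ stepCol b := by
      rw [hheadq, hlastq]
      rintro a ha b hb
      simp only [Option.mem_def, Option.some.injEq] at ha hb
      subst ha; subst hb
      exact ⟨hlast.trans hhead.symm, hcolwrap⟩
    set v0 := (stepSrc (T.head hne)).1 with hv0
    have hv : ∃ t ∈ T, stepTgt t = (v0, some false) := by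
      rcases hspan (v0, some false) with hmem | hmem
      · rw [List.mem_map] at hmem
        obtain ⟨r, hr, hreq⟩ := hmem
        obtain ⟨t, ht, hRt⟩ := cyc_pred hchain hwrapR r hr
        exact ⟨t, ht, hRt.1.trans hreq⟩
      · rw [List.mem_map] at hmem
        obtain ⟨t, ht, hteq⟩ := hmem
        exact ⟨t, ht, hteq⟩
    obtain ⟨t, ht, hteq⟩ := hv
    rcases adj_cases (hadj t ht) with ⟨u, w, hG, hsrct, htgt⟩ | ⟨w, ⟨hsrct, htgt⟩ | ⟨hsrct, htgt⟩⟩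
    · exact ⟨t, ht, u, stepCol t, hsrct, rfl⟩
    · rw [hteq] at htgt; rw [Prod.ext_iff] at htgt; simp at htgt
    · rw [hteq] at htgt
      rw [Prod.ext_iff] at htgt
      simp only [Option.some.injEq] at htgt
      have hcolt : stepCol t = true := by
        have h2 := htgt.2
        cases hc : stepCol t
        · rw [hc] at h2; simp at h2
        · rfl
      obtain ⟨s, hsmem, hRs⟩ := cyc_succ hchain hwrapR t ht
      have hcols : stepCol s = false := by
        have := hRs.2
        rw [hcolt] at this
        exact bool_eq_not (Ne.symm this)
      exact ⟨s, hsmem, v0, false, by rw [← hRs.1, hteq], hcols⟩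
  obtain ⟨s, hsT, u, c, hsrc, hcol⟩ := hGE
  obtain ⟨A, B, rfl⟩ := List.append_of_mem hsT
  have hrot := closedAltTrail_rotate (reduceG G) (B := s :: B) (by simp) hT
  have hspan2 : ∀ p, visits ((s :: B) ++ A) p := by
    intro p
    rcases hspan p with hp | hp
    · refine Or.inl ?_
      rw [List.map_append, List.mem_append] at hp ⊢
      simp only [List.map_cons, List.mem_cons] at hp ⊢
      tauto
    · refine Or.inr ?_
      rw [List.map_append, List.mem_append] at hp ⊢
      simp only [List.map_cons, List.mem_cons] at hp ⊢
      tauto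
  have hrot' := hrot
  obtain ⟨u'', ⟨⟨hne2, hhead2, hlast2, hadj2, hchain2⟩, hnodup2⟩, hwrap2⟩ := hrot'
  have hhd : ((s :: B) ++ A).head? = some s := by simp
  have hlastq2 : ((s :: B) ++ A).getLast? = some (((s :: B) ++ A).getLast hne2) :=
    List.getLast?_eq_getLast hne2
  rw [hhd] at hhead2
  rw [hlastq2] at hlast2
  simp only [Option.map_some, Option.some.injEq] at hhead2 hlast2
  have hwrapc2 : stepCol (((s :: B) ++ A).getLast hne2) ≠ stepCol s := by
    simp only [lastColour, firstColour, hhd, hlastq2, Option.map_some, ne_eq,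
      Option.some.injEq] at hwrap2
    exact hwrap2
  have hcollast : stepCol (((s :: B) ++ A).getLast hne2) = !c := by
    rw [← hcol]
    exact bool_eq_not hwrapc2
  obtain ⟨M, hMne, hMeq⟩ := parse (((s :: B) ++ A).length) ((s :: B) ++ A) rfl hne2 hadj2
    hchain2 ⟨s, u, c, hhd, hsrc, hcol⟩
    ⟨((s :: B) ++ A).getLast hne2, u, c, hlastq2,
      by rw [hlast2.trans hhead2.symm, hsrc], hcollast⟩
  rw [hMeq] at hrot hspan2
  exact ⟨M, transfer hMne hrot hspan2⟩

end TwoEC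


open TwoEC in
theorem altHamCycle_iff_reduction_supereulerian {V : Type} (G : TwoEC V) :
    (∃ L, G.IsAltHamCycle L) ↔ (reduceG G).Supereulerian :=
  ⟨fun ⟨_, hL⟩ => forward hL, fun h => backward h⟩
end
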